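/- Let (n_k) be an increasing sequence of positive integers such that all ratios n_{k+1}/n_k are integers and ∑_{k=1}^∞ n_k/n_{k+1} = ∞. Then there exists no sequence (g_k) of independent identically distributed functions on [0,1] such that λ{x : |cos(2π n_k x) − g_k(x)| ≥ ε_k} ≤ ε_k for all k with some sequence (ε_k) satisfying ∑_{k=1}^∞ ε_k < ∞. -/

import Mathlib

open MeasureTheory Filter Set Real Topology ProbabilityTheory
open scoped ENNReal

noncomputable def dZ (t : ℝ) : ℝ := |t - round t|

lemma dZ_nonneg (t : ℝ) : 0 ≤ dZ t := abs_nonneg _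

lemma dZ_le_half (t : ℝ) : dZ t ≤ 1/2 := abs_sub_round t

lemma dZ_le (t : ℝ) (n : ℤ) : dZ t ≤ |t - n| := by
  rcases eq_or_ne n (round t) with h | h
  · simp [dZ, h]
  · by_contra hlt
    push_neg at hlt
    have h1 : |t - (n:ℝ)| < 1/2 := lt_of_lt_of_le hlt (dZ_le_half t)
    have h2 : |(round t : ℝ) - n| < 1 := by
      have := abs_sub_round t
      calc |(round t : ℝ) - n| ≤ |(round t : ℝ) - t| + |t - n| := abs_sub_le _ _ _
        _ < 1/2 + 1/2 := by
            rw [abs_sub_comm]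
            exact add_lt_add_of_le_of_lt this h1
        _ = 1 := by norm_num
    have h3 : ((round t : ℤ) : ℝ) ≠ (n : ℝ) := by exact_mod_cast (Ne.symm h)
    have h4 : (1:ℝ) ≤ |(round t : ℝ) - n| := by
      have : ((1:ℤ):ℝ) ≤ |((round t - n : ℤ) : ℝ)| := by
        rw [← Int.cast_abs]
        exact_mod_cast Int.one_le_abs (sub_ne_zero.mpr (Ne.symm h))
      simpa using this
    linarith

lemma dZ_lipschitz (a b : ℝ) : dZ a ≤ |a - b| + dZ b := by
  have := dZ_le a (round b)
  calc dZ a ≤ |a - round b| := this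
    _ ≤ |a - b| + |b - round b| := by
        have := abs_sub_le a b (round b); simpa using this
    _ = |a - b| + dZ b := rfl

lemma dZ_int_add (t : ℝ) (m : ℤ) : dZ (t + m) = dZ t := by
  have h1 : dZ (t + m) ≤ dZ t := by
    have := dZ_le (t + m) (round t + m)
    simp [add_sub_add_right_eq_sub, Int.cast_add] at this; exact this
  have h2 : dZ t ≤ dZ (t + m) := by
    have := dZ_le t (round (t + m) - m)
    have e : t - ((round (t+m) - m : ℤ) : ℝ) = t + m - round (t+m) := by
      push_cast; ring
    rw [e] at this
    exact this
  linarith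

lemma dZ_neg (t : ℝ) : dZ (-t) = dZ t := by
  have h : ∀ s : ℝ, dZ (-s) ≤ dZ s := by
    intro s
    have h0 := dZ_le (-s) (-round s)
    have e : |-s - ((-round s : ℤ):ℝ)| = |s - round s| := by
      push_cast
      rw [show -s - -(round s:ℝ) = -(s - round s) by ring, abs_neg]
    rw [e] at h0
    exact h0
  have h2 := h (-t)
  rw [neg_neg] at h2
  exact le_antisymm (h t) h2

lemma dZ_nat_mul (q : ℕ) (t : ℝ) : dZ (q * t) = dZ (q * dZ t) := by
  set r := round t with hr
  have hs : (q:ℝ) * t = (q:ℝ) * (t - r) + (q * r : ℤ) := by push_cast; ring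
  rw [hs, dZ_int_add]
  rcases abs_cases (t - (r:ℝ)) with ⟨h1, _⟩ | ⟨h1, _⟩
  · have e : (q:ℝ) * dZ t = (q:ℝ) * (t - r) := by rw [dZ, ← hr, h1]
    rw [e]
  · have e : (q:ℝ) * dZ t = -((q:ℝ) * (t - r)) := by rw [dZ, ← hr, h1]; ring
    rw [e, dZ_neg]

lemma cos_two_pi_dZ (t : ℝ) : Real.cos (2*π*t) = Real.cos (2*π* dZ t) := by
  have h1 : Real.cos (2*π*t) = Real.cos (2*π*(t - round t)) := by
    have := Real.cos_sub_int_mul_two_pi (2*π*t) (round t)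
    rw [← this]; ring_nf
  rw [h1, dZ]
  rw [show 2*π*|t - (round t:ℝ)| = |2*π| * |t - (round t:ℝ)| by
    rw [abs_of_pos (by positivity : (0:ℝ) < 2*π)]]
  rw [← abs_mul, Real.cos_abs]

lemma sin_ge_sin {v u : ℝ} (hv : 0 ≤ v) (hvu : v ≤ u) (hu : u ≤ π - v) :
    Real.sin v ≤ Real.sin u := by
  have hv2 : v ≤ π/2 := by linarith
  rcases le_or_gt u (π/2) with h | h
  · exact Real.sin_le_sin_of_le_of_le_pi_div_two (by linarith) h hvu
  · rw [← Real.sin_pi_sub u]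
    exact Real.sin_le_sin_of_le_of_le_pi_div_two (by linarith) (by linarith) (by linarith)

lemma cos_two_pi_anti {z w : ℝ} (h0 : 0 ≤ z) (hzw : z ≤ w) (hw : w ≤ 1/2) :
    Real.cos (2*π*w) ≤ Real.cos (2*π*z) := by
  have hπ := Real.pi_pos
  rcases eq_or_lt_of_le hzw with h | h
  · rw [h]
  · exact le_of_lt (Real.strictAntiOn_cos
      ⟨by nlinarith, by nlinarith⟩ ⟨by nlinarith, by nlinarith⟩ (by nlinarith))

lemma lt_of_cos_two_pi_lt {z w : ℝ} (h0 : 0 ≤ z) (hz : z ≤ 1/2) (h0w : 0 ≤ w) (hw : w ≤ 1/2)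
    (h : Real.cos (2*π*z) < Real.cos (2*π*w)) : w < z := by
  by_contra hc
  push_neg at hc
  exact absurd (cos_two_pi_anti h0 hc hw) (not_le.mpr h)


lemma arccos_modulus {s t : ℝ} (h1 : -1 ≤ s) (hst : s ≤ t) (h2 : t ≤ 1) :
    Real.arccos s - Real.arccos t ≤ Real.arccos (1 - (t - s)) := by
  set a := Real.arccos t with ha
  set b := Real.arccos s with hb
  have ha0 : 0 ≤ a := Real.arccos_nonneg t
  have hbπ : b ≤ π := Real.arccos_le_pi s
  have hab : a ≤ b := by
    rw [ha, hb]
    unfold Real.arccos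
    have := Real.monotone_arcsin hst
    linarith
  have hca : Real.cos a = t := Real.cos_arccos (le_trans h1 hst) h2
  have hcb : Real.cos b = s := Real.cos_arccos h1 (le_trans hst h2)
  -- key: cos (b - a) ≥ 1 - (t - s)
  have key : 1 - (t - s) ≤ Real.cos (b - a) := by
    have e1 : Real.cos a - Real.cos b
        = 2 * Real.sin ((a+b)/2) * Real.sin ((b-a)/2) := by
      rw [Real.cos_sub_cos]
      rw [show (a - b)/2 = -((b-a)/2) by ring, Real.sin_neg]
      ring
    have e2 : Real.cos (b - a) = 1 - 2 * Real.sin ((b-a)/2)^2 := by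
      have := Real.cos_sq' ((b-a)/2)
      have h2m := Real.cos_two_mul' ((b-a)/2)
      rw [show 2*((b-a)/2) = b - a by ring] at h2m
      rw [h2m, this]
      have := Real.sin_sq_add_cos_sq ((b-a)/2)
      nlinarith [Real.sin_sq_add_cos_sq ((b-a)/2)]
    have hs1 : 0 ≤ Real.sin ((b-a)/2) :=
      Real.sin_nonneg_of_nonneg_of_le_pi (by linarith) (by linarith [Real.pi_pos])
    have hs2 : Real.sin ((b-a)/2) ≤ Real.sin ((a+b)/2) :=
      sin_ge_sin (by linarith) (by linarith) (by linarith)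
    have : Real.cos a - Real.cos b ≥ 2 * Real.sin ((b-a)/2)^2 := by nlinarith
    rw [hca, hcb] at this
    nlinarith
  have hcos1 : Real.cos (b - a) ≤ 1 := Real.cos_le_one _
  calc b - a = Real.arccos (Real.cos (b - a)) := (Real.arccos_cos (by linarith) (by linarith)).symm
    _ ≤ Real.arccos (1 - (t - s)) := by
        unfold Real.arccos
        have := Real.monotone_arcsin key
        linarith

lemma arccos_one_sub_le {δ : ℝ} (h0 : 0 ≤ δ) (h1 : δ ≤ 1) :
    Real.arccos (1 - δ) ≤ 2 * Real.sqrt δ := by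
  rcases eq_or_lt_of_le h0 with h | h
  · rw [← h]; simp [Real.arccos_one]
  · set u := Real.sqrt δ with hu
    have hu0 : 0 < u := Real.sqrt_pos.mpr h
    have hu1 : u ≤ 1 := by
      rw [hu, show (1:ℝ) = Real.sqrt 1 by simp]
      exact Real.sqrt_le_sqrt h1
    have husq : u*u = δ := Real.mul_self_sqrt h0
    -- 1 - cos(2u) ≥ 9 u^2 /8 ≥ δ  i.e. cos (2u) ≤ 1 - δ
    have hsin : 3*u/4 ≤ Real.sin u := by
      have := Real.sin_gt_sub_cube hu0
      nlinarith [mul_nonneg hu0.le hu0.le]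
    have hcos : Real.cos (2*u) ≤ 1 - δ := by
      have e : Real.cos (2*u) = 1 - 2 * Real.sin u ^ 2 := by
        have h2m := Real.cos_two_mul' u
        nlinarith [Real.sin_sq_add_cos_sq u]
      rw [e]
      have : Real.sin u ^ 2 ≥ 9 * u^2 / 16 := by nlinarith
      nlinarith
    have h2u : 2*u ≤ π := by nlinarith [Real.pi_gt_three]
    calc Real.arccos (1 - δ) ≤ Real.arccos (Real.cos (2*u)) := by
          unfold Real.arccos
          have := Real.monotone_arcsin hcos
          linarith
      _ = 2*u := Real.arccos_cos (by linarith) h2u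

lemma cos_gap {u d : ℝ} (hu : 7/32 ≤ u) (hd : 0 ≤ d) (hud : u + d ≤ 9/32) (hd2 : d ≤ 1/128) :
    4 * d ≤ Real.cos (2*π*u) - Real.cos (2*π*(u+d)) := by
  rcases eq_or_lt_of_le hd with h | h
  · rw [← h]; simp
  · have hπ3 : (3:ℝ) < π := Real.pi_gt_three
    have hπ4 : π < 3.15 := by linarith [Real.pi_lt_d2]
    have e1 : Real.cos (2*π*u) - Real.cos (2*π*(u+d))
        = 2 * Real.sin (2*π*u + π*d) * Real.sin (π*d) := by
      rw [Real.cos_sub_cos]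
      rw [show (2*π*u - 2*π*(u+d))/2 = -(π*d) by ring, Real.sin_neg,
          show (2*π*u + 2*π*(u+d))/2 = 2*π*u + π*d by ring]
      ring
    rw [e1]
    have hpd1 : π*d ≤ 1 := by nlinarith
    have hsin1 : 3*(π*d)/4 ≤ Real.sin (π*d) := by
      have hst := Real.sin_gt_sub_cube (by positivity : 0 < π*d)
      have hx : (0:ℝ) ≤ π*d := by positivity
      have h3 : (π*d)^3 ≤ π*d := by nlinarith [mul_nonneg hx hx]
      nlinarith
    -- sin(mid) ≥ 9/10 where mid = 2πu + πd ∈ [7π/16, 9π/16 + small]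
    set m := 2*π*u + π*d with hm
    have hmid : |m - π/2| ≤ π/8 := by
      rw [abs_le]
      constructor <;> nlinarith
    have hsin2 : (9:ℝ)/10 ≤ Real.sin m := by
      have : Real.sin m = Real.cos (π/2 - m) := (Real.cos_pi_div_two_sub m).symm
      rw [this, ← Real.cos_abs]
      have h1 : Real.cos |π/2 - m| ≥ 1 - (π/8)^2/2 := by
        have hq := Real.one_sub_sq_div_two_le_cos (x := |π/2 - m|)
        have habs : |π/2 - m| ≤ π/8 := by rw [abs_sub_comm]; exact hmid
        nlinarith [abs_nonneg (π/2 - m)]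
      nlinarith
    have hpd0 : 0 ≤ Real.sin (π*d) := by nlinarith
    nlinarith


lemma sum_ofReal_div (N : ℕ) (hN : 0 < N) (c : ℝ) :
    ∑ _m ∈ Finset.range N, ENNReal.ofReal (c/N) = ENNReal.ofReal c := by
  rw [Finset.sum_const, Finset.card_range, nsmul_eq_mul]
  rcases le_or_gt 0 c with hc | hc
  · have h1 : ((N : ℕ) : ℝ≥0∞) = ENNReal.ofReal ((N:ℕ) : ℝ) := by
      rw [ENNReal.ofReal_natCast]
    rw [h1, ← ENNReal.ofReal_mul (by positivity)]
    congr 1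
    field_simp
  · have h1 : c / (N:ℝ) ≤ 0 := by
      exact div_nonpos_of_nonpos_of_nonneg hc.le (by positivity)
    rw [ENNReal.ofReal_eq_zero.mpr h1, mul_zero]
    exact (ENNReal.ofReal_eq_zero.mpr hc.le).symm

lemma round_nonneg_of (t : ℝ) (h : 0 ≤ t) : 0 ≤ round t := by
  have h1 : |t - round t| ≤ 1/2 := abs_sub_round t
  have h2 : (round t : ℝ) ≥ t - 1/2 := by
    rcases abs_le.mp h1 with ⟨ha, hb⟩; linarith
  by_contra hc
  push_neg at hc
  have : (round t : ℝ) ≤ -1 := by exact_mod_cast Int.le_of_lt_add_one (by simpa using hc)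
  linarith

lemma round_le_of (t : ℝ) (N : ℕ) (h : t ≤ N) : round t ≤ N := by
  have h1 : |t - round t| ≤ 1/2 := abs_sub_round t
  have h2 : (round t : ℝ) ≤ t + 1/2 := by
    rcases abs_le.mp h1 with ⟨ha, hb⟩; linarith
  by_contra hc
  push_neg at hc
  have : ((N:ℤ) + 1 : ℝ) ≤ (round t : ℝ) := by exact_mod_cast hc
  push_cast at this
  linarith

lemma vol_lower (N : ℕ) (hN : 0 < N) (u v : ℝ) (hu : 0 ≤ u) (huv : u ≤ v) (hv : v < 1/2) :
    ENNReal.ofReal (v - u) ≤ volume {x ∈ Icc (0:ℝ) 1 | dZ (N*x) ∈ Ioo u v} := by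
  have hNR : (0:ℝ) < N := by exact_mod_cast hN
  have hsub : (⋃ m ∈ Finset.range N, Ioo (((m:ℝ)+u)/N) (((m:ℝ)+v)/N))
      ⊆ {x ∈ Icc (0:ℝ) 1 | dZ (N*x) ∈ Ioo u v} := by
    intro x hx
    simp only [Finset.mem_range, mem_iUnion, mem_Ioo, exists_prop] at hx
    obtain ⟨m, hm, hx1, hx2⟩ := hx
    have hmN : (m:ℝ) + 1 ≤ N := by exact_mod_cast hm
    have ht1 : (m:ℝ) + u < N * x := by
      rw [div_lt_iff₀ hNR] at hx1; linarith
    have ht2 : N * x < (m:ℝ) + v := by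
      rw [lt_div_iff₀ hNR] at hx2; linarith
    have hround : round (N*x) = (m:ℤ) := by
      rw [round_eq]
      apply Int.floor_eq_iff.mpr
      constructor
      · push_cast; linarith
      · push_cast; linarith
    constructor
    · constructor
      · have h0 : (0:ℝ) ≤ ((m:ℝ)+u)/N := by positivity
        linarith
      · have h1 : ((m:ℝ)+v)/N ≤ 1 := by
          rw [div_le_one hNR]; linarith
        linarith
    · rw [dZ, hround]
      push_cast
      rw [abs_of_pos (by linarith)]
      exact ⟨by linarith, by linarith⟩
  calc ENNReal.ofReal (v - u)
      = ∑ m ∈ Finset.range N, volume (Ioo (((m:ℝ)+u)/N) (((m:ℝ)+v)/N)) := by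
        rw [← sum_ofReal_div N hN (v - u)]
        apply Finset.sum_congr rfl
        intro m _
        rw [Real.volume_Ioo]
        congr 1
        field_simp
        ring
    _ = volume (⋃ m ∈ Finset.range N, Ioo (((m:ℝ)+u)/N) (((m:ℝ)+v)/N)) := by
        rw [measure_biUnion_finset ?hd (fun m _ => measurableSet_Ioo)]
        case hd =>
          intro i _ j _ hij
          apply Set.disjoint_left.mpr
          intro x hx1 hx2
          simp only [mem_Ioo] at hx1 hx2
          have e1 : (i:ℝ) + u < N*x := by rw [div_lt_iff₀ hNR] at hx1; linarith [hx1.1]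
          have e2 : N*x < (i:ℝ) + v := by
            have := hx1.2; rw [lt_div_iff₀ hNR] at this; linarith
          have e3 : (j:ℝ) + u < N*x := by
            have := hx2.1; rw [div_lt_iff₀ hNR] at this; linarith
          have e4 : N*x < (j:ℝ) + v := by
            have := hx2.2; rw [lt_div_iff₀ hNR] at this; linarith
          rcases lt_or_gt_of_ne hij with h | h
          · have : (i:ℝ) + 1 ≤ j := by exact_mod_cast h
            linarith
          · have : (j:ℝ) + 1 ≤ i := by exact_mod_cast h
            linarith
    _ ≤ volume {x ∈ Icc (0:ℝ) 1 | dZ (N*x) ∈ Ioo u v} := measure_mono hsub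

lemma vol_upper (N : ℕ) (hN : 0 < N) (z₁ z₂ : ℝ) (h1 : 0 ≤ z₁) :
    volume {x ∈ Icc (0:ℝ) 1 | dZ (N*x) ∈ Icc z₁ z₂}
      ≤ ENNReal.ofReal (2*(z₂ - z₁)) := by
  have hNR : (0:ℝ) < N := by exact_mod_cast hN
  rcases lt_or_ge z₂ z₁ with hz | hz
  · have : {x ∈ Icc (0:ℝ) 1 | dZ (N*x) ∈ Icc z₁ z₂} = ∅ := by
      ext x
      simp only [mem_setOf_eq, mem_Icc, mem_empty_iff_false, iff_false, not_and]
      intro _ h h2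
      exact absurd (le_trans h h2) (not_le.mpr hz)
    rw [this]
    simp
  · have hsub : {x ∈ Icc (0:ℝ) 1 | dZ (N*x) ∈ Icc z₁ z₂}
        ⊆ (⋃ m ∈ Finset.range N, Icc (((m:ℝ)+z₁)/N) (((m:ℝ)+z₂)/N))
          ∪ (⋃ m ∈ Finset.range N, Icc (((m:ℝ)+1-z₂)/N) (((m:ℝ)+1-z₁)/N)) := by
      rintro x ⟨⟨hx0, hx1⟩, hd⟩
      set t := (N:ℝ) * x with htdef
      have ht0 : 0 ≤ t := by positivity
      have htN : t ≤ N := by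
        rw [htdef]
        nlinarith
      set r := round t with hrdef
      have hr0 : 0 ≤ r := round_nonneg_of t ht0
      have hrN : r ≤ N := round_le_of t N htN
      have habs : z₁ ≤ |t - r| ∧ |t - r| ≤ z₂ := hd
      rcases le_or_gt (r:ℝ) t with hc | hc
      · -- t ≥ r
        have habs' : z₁ ≤ t - r ∧ t - r ≤ z₂ := by
          rwa [abs_of_nonneg (by linarith)] at habs
        rcases lt_or_ge r N with hrN' | hrN'
        · left
          simp only [Finset.mem_range, mem_iUnion, mem_Icc, exists_prop]
          refine ⟨r.toNat, ?_, ?_, ?_⟩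
          · omega
          · rw [div_le_iff₀ hNR]
            have : ((r.toNat : ℤ) : ℝ) = (r:ℝ) := by
              congr 1; omega
            push_cast at this ⊢
            rw [this]
            linarith [habs'.1]
          · rw [le_div_iff₀ hNR]
            have : ((r.toNat : ℤ) : ℝ) = (r:ℝ) := by congr 1; omega
            push_cast at this ⊢
            rw [this]
            linarith [habs'.2]
        · -- r = N, so t = N and z₁ = 0
          have hrN2 : r = N := le_antisymm hrN hrN'
          have htr : (r:ℝ) ≤ N := by exact_mod_cast hrN
          have ht_eq : t = N := by
            have : (r:ℝ) = N := by exact_mod_cast hrN2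
            linarith [habs'.1, this ▸ habs'.1]
          right
          simp only [Finset.mem_range, mem_iUnion, mem_Icc, exists_prop]
          refine ⟨N-1, by omega, ?_, ?_⟩
          · rw [div_le_iff₀ hNR]
            have hNc : ((N-1 : ℕ):ℝ) = (N:ℝ) - 1 := by
              push_cast [Nat.cast_sub (by omega : 1 ≤ N)]; ring
            rw [hNc]
            have hrr : (r:ℝ) = N := by exact_mod_cast hrN2
            have hz2 : 0 ≤ z₂ := by nlinarith [habs'.2]
            nlinarith [habs'.2, ht_eq]
          · rw [le_div_iff₀ hNR]
            have hNc : ((N-1 : ℕ):ℝ) = (N:ℝ) - 1 := by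
              push_cast [Nat.cast_sub (by omega : 1 ≤ N)]; ring
            rw [hNc]
            have : (r:ℝ) = N := by exact_mod_cast hrN2
            nlinarith [habs'.1, ht_eq, h1]
      · -- t < r
        have habs' : z₁ ≤ r - t ∧ (r:ℝ) - t ≤ z₂ := by
          rw [abs_of_neg (by linarith)] at habs
          constructor <;> linarith [habs.1, habs.2]
        have hr1 : 1 ≤ r := by
          by_contra hcc
          push_neg at hcc
          have : r ≤ 0 := by omega
          have : (r:ℝ) ≤ 0 := by exact_mod_cast this
          linarith
        right
        simp only [Finset.mem_range, mem_iUnion, mem_Icc, exists_prop]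
        refine ⟨(r-1).toNat, by omega, ?_, ?_⟩
        · rw [div_le_iff₀ hNR]
          have : (((r-1).toNat : ℤ) : ℝ) = (r:ℝ) - 1 := by
            push_cast [Int.toNat_of_nonneg (by omega : (0:ℤ) ≤ r - 1)]; ring
          push_cast at this ⊢
          rw [this]
          linarith [habs'.2]
        · rw [le_div_iff₀ hNR]
          have : (((r-1).toNat : ℤ) : ℝ) = (r:ℝ) - 1 := by
            push_cast [Int.toNat_of_nonneg (by omega : (0:ℤ) ≤ r - 1)]; ring
          push_cast at this ⊢
          rw [this]
          linarith [habs'.1]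
    calc volume {x ∈ Icc (0:ℝ) 1 | dZ (N*x) ∈ Icc z₁ z₂}
        ≤ volume ((⋃ m ∈ Finset.range N, Icc (((m:ℝ)+z₁)/N) (((m:ℝ)+z₂)/N))
          ∪ (⋃ m ∈ Finset.range N, Icc (((m:ℝ)+1-z₂)/N) (((m:ℝ)+1-z₁)/N))) := measure_mono hsub
      _ ≤ volume (⋃ m ∈ Finset.range N, Icc (((m:ℝ)+z₁)/N) (((m:ℝ)+z₂)/N))
          + volume (⋃ m ∈ Finset.range N, Icc (((m:ℝ)+1-z₂)/N) (((m:ℝ)+1-z₁)/N)) :=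
          measure_union_le _ _
      _ ≤ ENNReal.ofReal (z₂ - z₁) + ENNReal.ofReal (z₂ - z₁) := by
          gcongr
          · calc volume (⋃ m ∈ Finset.range N, Icc (((m:ℝ)+z₁)/N) (((m:ℝ)+z₂)/N))
                ≤ ∑ m ∈ Finset.range N, volume (Icc (((m:ℝ)+z₁)/N) (((m:ℝ)+z₂)/N)) :=
                  measure_biUnion_finset_le _ _
              _ = ENNReal.ofReal (z₂ - z₁) := by
                  rw [← sum_ofReal_div N hN (z₂ - z₁)]
                  apply Finset.sum_congr rfl
                  intro m _
                  rw [Real.volume_Icc]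
                  congr 1
                  field_simp
                  ring
          · calc volume (⋃ m ∈ Finset.range N, Icc (((m:ℝ)+1-z₂)/N) (((m:ℝ)+1-z₁)/N))
                ≤ ∑ m ∈ Finset.range N, volume (Icc (((m:ℝ)+1-z₂)/N) (((m:ℝ)+1-z₁)/N)) :=
                  measure_biUnion_finset_le _ _
              _ = ENNReal.ofReal (z₂ - z₁) := by
                  rw [← sum_ofReal_div N hN (z₂ - z₁)]
                  apply Finset.sum_congr rfl
                  intro m _
                  rw [Real.volume_Icc]
                  congr 1
                  field_simp
                  ring
      _ = ENNReal.ofReal (2*(z₂ - z₁)) := by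
          rw [← ENNReal.ofReal_add (by linarith) (by linarith)]
          congr 1
          ring

lemma cos_two_pi_lt {z w : ℝ} (h0 : 0 ≤ z) (hzw : z < w) (hw : w ≤ 1/2) :
    Real.cos (2*π*w) < Real.cos (2*π*z) := by
  have hπ := Real.pi_pos
  exact Real.strictAntiOn_cos ⟨by nlinarith, by nlinarith⟩ ⟨by nlinarith, by nlinarith⟩
    (by nlinarith)

lemma arccos_anti {s t : ℝ} (h : s ≤ t) : Real.arccos t ≤ Real.arccos s := by
  unfold Real.arccos
  have := Real.monotone_arcsin h
  linarith

lemma two_pi_mem {z : ℝ} (h0 : 0 ≤ z) (h2 : z ≤ 1/2) : 0 ≤ 2*π*z ∧ 2*π*z ≤ π := by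
  constructor
  · positivity
  · have := mul_le_mul_of_nonneg_left h2 (by positivity : (0:ℝ) ≤ 2*π)
    linarith

lemma muA_lower (N1 : ℕ) (hN1 : 0 < N1) (a ε1 : ℝ) (ha : 0 < a) (ha2 : a ≤ 1/2)
    (hε : 0 ≤ ε1) (hεa : ε1 ≤ a/100) (g1 : ℝ → ℝ)
    (hD : volume {x ∈ Icc (0:ℝ) 1 | ε1 ≤ |Real.cos (2*π*(N1:ℝ)*x) - g1 x|}
      ≤ ENNReal.ofReal ε1) :
    ENNReal.ofReal (a/16) ≤ (volume.restrict (Icc (0:ℝ) 1))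
      (g1 ⁻¹' Ioo (Real.cos (2*π*(1/4+a/16)) + ε1) (Real.cos (2*π*(1/4-a/16)) - ε1)) := by
  set μ := volume.restrict (Icc (0:ℝ) 1) with hμdef
  set α : ℝ := 1/4 - a/16 with hαdef
  set β : ℝ := 1/4 + a/16 with hβdef
  set α₂ : ℝ := α + a/64 with hα₂def
  set β₂ : ℝ := β - a/64 with hβ₂def
  set D1 : Set ℝ := {x ∈ Icc (0:ℝ) 1 | ε1 ≤ |Real.cos (2*π*(N1:ℝ)*x) - g1 x|} with hD1def
  set A : Set ℝ := g1 ⁻¹' Ioo (Real.cos (2*π*β) + ε1) (Real.cos (2*π*α) - ε1) with hAdef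
  have hμap : ∀ S : Set ℝ, μ S = volume (S ∩ Icc (0:ℝ) 1) := fun S => by
    rw [hμdef, Measure.restrict_apply' measurableSet_Icc]
  -- gap inequalities
  have hgap1 : Real.cos (2*π*α) - Real.cos (2*π*α₂) ≥ 4*(a/64) := by
    have hcg := cos_gap (u := α) (d := a/64) (by rw [hαdef]; linarith) (by linarith)
      (by rw [hαdef]; linarith) (by linarith)
    rw [hα₂def]
    linarith
  have hgap2 : Real.cos (2*π*β₂) - Real.cos (2*π*β) ≥ 4*(a/64) := by
    have hcg := cos_gap (u := β₂) (d := a/64) (by rw [hβ₂def, hβdef]; linarith) (by linarith)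
      (by rw [hβ₂def, hβdef]; linarith) (by linarith)
    have e : β₂ + a/64 = β := by rw [hβ₂def]; ring
    rw [e] at hcg
    linarith
  set U : Set ℝ := {x ∈ Icc (0:ℝ) 1 | dZ ((N1 : ℝ)*x) ∈ Ioo α₂ β₂} with hUdef
  have hUsub : U \ D1 ⊆ A := by
    rintro x ⟨⟨hx01, hzin⟩, hxD1⟩
    have hd1 : |Real.cos (2*π*(N1:ℝ)*x) - g1 x| < ε1 := by
      by_contra hcc
      push_neg at hcc
      exact hxD1 ⟨hx01, hcc⟩
    rcases abs_lt.mp hd1 with ⟨hd1a, hd1b⟩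
    obtain ⟨hz1, hz2'⟩ := hzin
    have hz0 : 0 ≤ dZ ((N1 : ℝ)*x) := dZ_nonneg _
    have hzh : dZ ((N1 : ℝ)*x) ≤ 1/2 := dZ_le_half _
    have hcosz : Real.cos (2*π*(N1:ℝ)*x) = Real.cos (2*π*dZ ((N1 : ℝ)*x)) := by
      rw [← cos_two_pi_dZ ((N1 : ℝ)*x)]
      ring_nf
    have hc1 : Real.cos (2*π*dZ ((N1 : ℝ)*x)) < Real.cos (2*π*α₂) :=
      cos_two_pi_lt (by rw [hα₂def, hαdef]; linarith) hz1 hzh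
    have hc2 : Real.cos (2*π*β₂) < Real.cos (2*π*dZ ((N1 : ℝ)*x)) :=
      cos_two_pi_lt hz0 hz2' (by rw [hβ₂def, hβdef]; linarith)
    rw [← hcosz] at hc1 hc2
    exact ⟨by linarith, by linarith⟩
  have hUvol : ENNReal.ofReal (3*a/32) ≤ μ U := by
    have e : β₂ - α₂ = 3*a/32 := by rw [hβ₂def, hα₂def, hβdef, hαdef]; ring
    have hUicc : U ∩ Icc (0:ℝ) 1 = U := inter_eq_left.mpr (sep_subset _ _)
    rw [hμap U, hUicc, ← e]
    exact vol_lower N1 hN1 α₂ β₂ (by rw [hα₂def, hαdef]; linarith)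
      (by rw [hα₂def, hβ₂def, hαdef, hβdef]; linarith) (by rw [hβ₂def, hβdef]; linarith)
  have hsplit : μ U ≤ μ A + ENNReal.ofReal ε1 := by
    calc μ U ≤ μ (U \ D1 ∪ D1) := by
          apply measure_mono
          intro x hx
          by_cases hxd : x ∈ D1
          · exact Or.inr hxd
          · exact Or.inl ⟨hx, hxd⟩
      _ ≤ μ (U \ D1) + μ D1 := measure_union_le _ _
      _ ≤ μ A + ENNReal.ofReal ε1 := by
          apply add_le_add (measure_mono hUsub)
          calc μ D1 = volume (D1 ∩ Icc (0:ℝ) 1) := hμap D1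
            _ ≤ volume D1 := measure_mono inter_subset_left
            _ ≤ ENNReal.ofReal ε1 := hD
  have h1 : ENNReal.ofReal (3*a/32) - ENNReal.ofReal ε1 ≤ μ A :=
    tsub_le_iff_right.mpr (le_trans hUvol hsplit)
  calc ENNReal.ofReal (a/16) ≤ ENNReal.ofReal (3*a/32 - ε1) := by
        apply ENNReal.ofReal_le_ofReal
        linarith
    _ = ENNReal.ofReal (3*a/32) - ENNReal.ofReal ε1 := ENNReal.ofReal_sub _ hε
    _ ≤ μ A := h1

lemma geom_step (q : ℕ) (a t : ℝ) (ha : 0 < a) (ha2 : a ≤ 1/2)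
    (hqa : (q:ℝ)*a = 1)
    (hf1lo : Real.cos (2*π*(1/4+a/16)) < Real.cos (2*π*t))
    (hf1hi : Real.cos (2*π*t) < Real.cos (2*π*(1/4-a/16))) :
    Real.cos (2*π*min (1/2) (dZ ((q:ℝ)/4) + 1/16)) ≤ Real.cos (2*π*((q:ℝ)*t)) ∧
    Real.cos (2*π*((q:ℝ)*t)) ≤ Real.cos (2*π*max 0 (dZ ((q:ℝ)/4) - 1/16)) := by
  have hqpos : (0:ℝ) < (q:ℝ) := by nlinarith
  set h : ℝ := dZ ((q:ℝ)/4) with hhdef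
  have hh0 : 0 ≤ h := dZ_nonneg _
  have hh2 : h ≤ 1/2 := dZ_le_half _
  set z : ℝ := dZ t with hzdef
  have hz0 : 0 ≤ z := dZ_nonneg _
  have hz2 : z ≤ 1/2 := dZ_le_half _
  have hcosz : Real.cos (2*π*t) = Real.cos (2*π*z) := cos_two_pi_dZ t
  rw [hcosz] at hf1lo hf1hi
  have hzβ : z < 1/4 + a/16 :=
    lt_of_cos_two_pi_lt (by linarith) (by linarith) hz0 hz2 hf1lo
  have hzα : 1/4 - a/16 < z :=
    lt_of_cos_two_pi_lt hz0 hz2 (by linarith) (by linarith) hf1hi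
  set z2 : ℝ := dZ ((q:ℝ) * t) with hz2def
  have hz20 : 0 ≤ z2 := dZ_nonneg _
  have hz22 : z2 ≤ 1/2 := dZ_le_half _
  have hz2eq : z2 = dZ ((q:ℝ) * z) := by
    rw [hz2def, hzdef, dZ_nat_mul]
  have hqz : |(q:ℝ)*z - (q:ℝ)/4| < 1/16 := by
    have h1 : |z - 1/4| < a/16 := by
      rw [abs_lt]
      exact ⟨by linarith, by linarith⟩
    have h2 : |(q:ℝ)*z - (q:ℝ)/4| = (q:ℝ) * |z - 1/4| := by
      rw [show (q:ℝ)*z - (q:ℝ)/4 = (q:ℝ)*(z - 1/4) by ring, abs_mul, abs_of_pos hqpos]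
    rw [h2]
    calc (q:ℝ) * |z - 1/4| < (q:ℝ) * (a/16) := mul_lt_mul_of_pos_left h1 hqpos
      _ = 1/16 := by rw [show (q:ℝ) * (a/16) = ((q:ℝ)*a)/16 by ring, hqa]
  have hz2h : |z2 - h| < 1/16 := by
    have hl1 := dZ_lipschitz ((q:ℝ)*z) ((q:ℝ)/4)
    have hl2 := dZ_lipschitz ((q:ℝ)/4) ((q:ℝ)*z)
    rw [abs_sub_comm ((q:ℝ)/4) ((q:ℝ)*z)] at hl2
    rw [hz2eq, abs_lt, hhdef]
    constructor
    · linarith [hqz]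
    · linarith [hqz]
  rcases abs_lt.mp hz2h with ⟨h1, h2⟩
  have hcos2 : Real.cos (2*π*((q:ℝ)*t)) = Real.cos (2*π*z2) := cos_two_pi_dZ _
  rw [hcos2]
  constructor
  · exact cos_two_pi_anti hz20 (le_min hz22 (by linarith)) (min_le_left _ _)
  · exact cos_two_pi_anti (le_max_left _ _) (max_le hz20 (by linarith)) hz22

lemma muT_upper (N2 : ℕ) (hN2 : 0 < N2) (h ε2 : ℝ) (hh0 : 0 ≤ h) (hh2 : h ≤ 1/2)
    (hε : 0 ≤ ε2) (hε200 : ε2 ≤ 1/200) (g2 : ℝ → ℝ)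
    (hD : volume {x ∈ Icc (0:ℝ) 1 | ε2 ≤ |Real.cos (2*π*(N2:ℝ)*x) - g2 x|}
      ≤ ENNReal.ofReal ε2) :
    (volume.restrict (Icc (0:ℝ) 1))
      (g2 ⁻¹' Icc (Real.cos (2*π*min (1/2) (h+1/16)) - ε2)
                  (Real.cos (2*π*max 0 (h-1/16)) + ε2))
      ≤ ENNReal.ofReal (2/5) := by
  set μ := volume.restrict (Icc (0:ℝ) 1) with hμdef
  have hπ : (0:ℝ) < π := Real.pi_pos
  have hπ3 : (3:ℝ) < π := Real.pi_gt_three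
  set zc1 : ℝ := max 0 (h - 1/16) with hzc1def
  set zc2 : ℝ := min (1/2) (h + 1/16) with hzc2def
  have hzc10 : 0 ≤ zc1 := le_max_left _ _
  have hzc12 : zc1 ≤ 1/2 := max_le (by norm_num) (by linarith)
  have hzc20 : 0 ≤ zc2 := le_min (by norm_num) (by linarith)
  have hzc22 : zc2 ≤ 1/2 := min_le_left _ _
  have hzc1le : zc1 ≤ zc2 := max_le hzc20 (le_min (by linarith) (by linarith))
  have hzcdiff : zc2 - zc1 ≤ 1/8 := by
    have h1 : h - 1/16 ≤ zc1 := le_max_right _ _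
    have h2 : zc2 ≤ h + 1/16 := min_le_right _ _
    linarith
  set M : ℝ := Real.cos (2*π*zc1) with hMdef
  set m : ℝ := Real.cos (2*π*zc2) with hmdef
  have hmM : m ≤ M := cos_two_pi_anti hzc10 hzc1le hzc22
  have hm1 : -1 ≤ m := Real.neg_one_le_cos _
  have hM1 : M ≤ 1 := Real.cos_le_one _
  set D2 : Set ℝ := {x ∈ Icc (0:ℝ) 1 | ε2 ≤ |Real.cos (2*π*(N2:ℝ)*x) - g2 x|} with hD2def
  set T : Set ℝ := g2 ⁻¹' Icc (m - ε2) (M + ε2) with hTdef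
  have hμap : ∀ S : Set ℝ, μ S = volume (S ∩ Icc (0:ℝ) 1) := fun S => by
    rw [hμdef, Measure.restrict_apply' measurableSet_Icc]
  set chi : ℝ := min 1 (M + 2*ε2) with hchidef
  set clo : ℝ := max (-1) (m - 2*ε2) with hclodef
  set z₁ : ℝ := Real.arccos chi / (2*π) with hz₁def
  set z₂ : ℝ := Real.arccos clo / (2*π) with hz₂def
  have hz₁0 : 0 ≤ z₁ := div_nonneg (Real.arccos_nonneg _) (by positivity)
  have hchi1 : chi ≤ 1 := min_le_left _ _
  have hchim : -1 ≤ chi := le_min (by norm_num) (by linarith)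
  have hclo1 : clo ≤ 1 := max_le (by norm_num) (by linarith)
  have hclom : -1 ≤ clo := le_max_left _ _
  have hMchi : M ≤ chi := le_min hM1 (by linarith)
  have hclom2 : clo ≤ m := max_le hm1 (by linarith)
  set V : Set ℝ := {x ∈ Icc (0:ℝ) 1 | dZ ((N2 : ℝ)*x) ∈ Icc z₁ z₂} with hVdef
  have hVsub : (T ∩ Icc (0:ℝ) 1) \ D2 ⊆ V := by
    rintro x ⟨⟨hxT, hx01⟩, hxD2⟩
    have hd2 : |Real.cos (2*π*(N2:ℝ)*x) - g2 x| < ε2 := by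
      by_contra hcc
      push_neg at hcc
      exact hxD2 ⟨hx01, hcc⟩
    obtain ⟨hTa, hTb⟩ := hxT
    rcases abs_lt.mp hd2 with ⟨hd2a, hd2b⟩
    set z : ℝ := dZ ((N2 : ℝ)*x) with hzdef
    have hz0 : 0 ≤ z := dZ_nonneg _
    have hzh : z ≤ 1/2 := dZ_le_half _
    have hcosz : Real.cos (2*π*(N2:ℝ)*x) = Real.cos (2*π*z) := by
      rw [← cos_two_pi_dZ ((N2 : ℝ)*x)]
      ring_nf
    have hflo : m - 2*ε2 < Real.cos (2*π*z) := by rw [← hcosz]; linarith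
    have hfhi : Real.cos (2*π*z) < M + 2*ε2 := by rw [← hcosz]; linarith
    have harc_eq : Real.arccos (Real.cos (2*π*z)) = 2*π*z :=
      Real.arccos_cos (two_pi_mem hz0 hzh).1 (two_pi_mem hz0 hzh).2
    refine ⟨hx01, ?_, ?_⟩
    · have hle : Real.cos (2*π*z) ≤ chi := le_min (Real.cos_le_one _) hfhi.le
      have h5 := arccos_anti hle
      rw [harc_eq] at h5
      rw [hz₁def, div_le_iff₀ (by positivity)]
      linarith
    · have hle : clo ≤ Real.cos (2*π*z) := max_le (Real.neg_one_le_cos _) hflo.le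
      have h5 := arccos_anti hle
      rw [harc_eq] at h5
      rw [hz₂def, le_div_iff₀ (by positivity)]
      linarith
  have harcm : Real.arccos m = 2*π*zc2 := by
    rw [hmdef]
    exact Real.arccos_cos (two_pi_mem hzc20 hzc22).1 (two_pi_mem hzc20 hzc22).2
  have harcM : Real.arccos M = 2*π*zc1 := by
    rw [hMdef]
    exact Real.arccos_cos (two_pi_mem hzc10 hzc12).1 (two_pi_mem hzc10 hzc12).2
  have harcsmall : Real.arccos (1 - 2*ε2) ≤ 1/5 := by
    have h1 := arccos_one_sub_le (δ := 2*ε2) (by linarith) (by linarith)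
    have hsq : Real.sqrt (2*ε2) ≤ 1/10 := by
      have h2 : (2*ε2) ≤ 1/100 := by linarith
      calc Real.sqrt (2*ε2) ≤ Real.sqrt (1/100) := Real.sqrt_le_sqrt h2
        _ = 1/10 := by
            rw [show (1/100:ℝ) = (1/10)^2 by norm_num, Real.sqrt_sq (by norm_num)]
    linarith
  have harc1 : Real.arccos clo ≤ Real.arccos m + Real.arccos (1 - 2*ε2) := by
    have h1 := arccos_modulus hclom hclom2 (by linarith : m ≤ 1)
    have h2 : Real.arccos (1 - (m - clo)) ≤ Real.arccos (1 - 2*ε2) := by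
      apply arccos_anti
      have h3 : m - 2*ε2 ≤ clo := le_max_right _ _
      linarith
    linarith
  have harc2 : Real.arccos M - Real.arccos (1 - 2*ε2) ≤ Real.arccos chi := by
    have h1 := arccos_modulus (by linarith : -1 ≤ M) hMchi hchi1
    have h2 : Real.arccos (1 - (chi - M)) ≤ Real.arccos (1 - 2*ε2) := by
      apply arccos_anti
      have h3 : chi ≤ M + 2*ε2 := min_le_right _ _
      linarith
    linarith
  have hz₂₁ : z₂ - z₁ ≤ 23/120 := by
    rw [hz₂def, hz₁def, div_sub_div_same, div_le_iff₀ (by positivity)]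
    nlinarith
  calc μ T = volume (T ∩ Icc (0:ℝ) 1) := hμap T
    _ ≤ volume (((T ∩ Icc (0:ℝ) 1) \ D2) ∪ D2) := by
        apply measure_mono
        intro x hx
        by_cases hxd : x ∈ D2
        · exact Or.inr hxd
        · exact Or.inl ⟨hx, hxd⟩
    _ ≤ volume ((T ∩ Icc (0:ℝ) 1) \ D2) + volume D2 := measure_union_le _ _
    _ ≤ ENNReal.ofReal (2*(z₂ - z₁)) + ENNReal.ofReal ε2 :=
        add_le_add (le_trans (measure_mono hVsub) (vol_upper N2 hN2 z₁ z₂ hz₁0)) hD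
    _ = ENNReal.ofReal (2*(z₂ - z₁) + ε2) := by
        have hcc : clo ≤ chi := le_trans hclom2 (le_trans hmM hMchi)
        have hz₁₂ : z₁ ≤ z₂ := by
          rw [hz₁def, hz₂def]
          exact (div_le_div_iff_of_pos_right (by positivity)).mpr (arccos_anti hcc)
        rw [← ENNReal.ofReal_add (by linarith) hε]
    _ ≤ ENNReal.ofReal (2/5) := by
        apply ENNReal.ofReal_le_ofReal
        linarith

/-- **Optimality of the i.i.d. approximation rate.** If `(n_k)` is an increasing
sequence of positive integers whose consecutive ratios are integers and
`∑ n_k/n_{k+1} = ∞`, then there is no i.i.d. sequence `(g_k)` on `[0,1]` with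
`λ{x : |cos(2π n_k x) − g_k(x)| ≥ ε_k} ≤ ε_k` for a summable sequence `(ε_k)`. -/
theorem no_iid_approximation
    (n : ℕ → ℕ) (hpos : ∀ k, 0 < n k) (hmono : StrictMono n)
    (hdvd : ∀ k, n k ∣ n (k + 1))
    (hdiv : ¬ Summable fun k => (n k : ℝ) / (n (k + 1) : ℝ)) :
    ¬ ∃ (g : ℕ → ℝ → ℝ) (ε : ℕ → ℝ),
        (∀ k, Measurable (g k)) ∧
        (∀ k, 0 ≤ ε k) ∧
        Summable ε ∧
        iIndepFun g (volume.restrict (Icc (0 : ℝ) 1)) ∧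
        (∀ k, IdentDistrib (g k) (g 0)
          (volume.restrict (Icc (0 : ℝ) 1)) (volume.restrict (Icc (0 : ℝ) 1))) ∧
        (∀ k, volume {x ∈ Icc (0 : ℝ) 1 |
            ε k ≤ |Real.cos (2 * π * (n k : ℝ) * x) - g k x|} ≤ ENNReal.ofReal (ε k)) := by
  rintro ⟨g, ε, hgm, hε0, hεsum, hindep, hident, happrox⟩
  -- find a good index
  obtain ⟨j, hj⟩ : ∃ j, ε j + ε (j+1) ≤ (n j : ℝ)/(n (j+1) : ℝ)/100 := by
    by_contra hc
    push_neg at hc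
    apply hdiv
    have hsum2 : Summable (fun k => 100*(ε k + ε (k+1))) :=
      ((hεsum.add ((summable_nat_add_iff 1).mpr hεsum)).mul_left 100)
    apply hsum2.of_nonneg_of_le
    · intro k
      have h1 := (hpos k).le
      have h2 : (0:ℝ) < (n (k+1) : ℝ) := by exact_mod_cast hpos (k+1)
      positivity
    · intro k
      have := (hc k).le
      linarith
  clear hdiv hεsum hident
  -- basic numeric facts
  obtain ⟨q, hq⟩ := hdvd j
  have hN1 : 0 < n j := hpos j
  have hN2 : 0 < n (j+1) := hpos (j+1)
  have hNlt : n j < n (j+1) := hmono (by omega)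
  clear hdvd hpos hmono
  have hq2 : 2 ≤ q := by
    rcases Nat.lt_or_ge q 2 with hh | hh
    · interval_cases q <;> omega
    · exact hh
  set a : ℝ := (n j : ℝ)/(n (j+1) : ℝ) with hadef
  have hN1R : (0:ℝ) < (n j : ℝ) := by exact_mod_cast hN1
  have hN2R : (0:ℝ) < (n (j+1) : ℝ) := by exact_mod_cast hN2
  have ha_pos : 0 < a := by positivity
  have hqR : ((n (j+1)) : ℝ) = (n j : ℝ) * q := by exact_mod_cast hq
  have hqa : (q:ℝ) * a = 1 := by
    rw [hadef, hqR]
    field_simp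
  have hqR2 : (2:ℝ) ≤ (q:ℝ) := by exact_mod_cast hq2
  have ha_half : a ≤ 1/2 := by
    have h2 : (2:ℝ) * a ≤ (q:ℝ) * a := mul_le_mul_of_nonneg_right hqR2 ha_pos.le
    rw [hqa] at h2
    linarith
  have hεj0 : 0 ≤ ε j := hε0 j
  have hεj'0 : 0 ≤ ε (j+1) := hε0 (j+1)
  have hεjs : ε j ≤ a/100 := by linarith
  have hεj's : ε (j+1) ≤ a/100 := by linarith
  have hεj'200 : ε (j+1) ≤ 1/200 := by linarith
  clear hε0
  -- measure and events
  set μ := volume.restrict (Icc (0 : ℝ) 1) with hμdef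
  have hprob : IsProbabilityMeasure μ := by
    constructor
    rw [hμdef, Measure.restrict_apply_univ, Real.volume_Icc]
    norm_num
  haveI := hprob
  set h : ℝ := dZ ((q:ℝ)/4) with hhdef
  set Sa : Set ℝ := Ioo (Real.cos (2*π*(1/4+a/16)) + ε j)
    (Real.cos (2*π*(1/4-a/16)) - ε j) with hSadef
  set Sb : Set ℝ := Icc (Real.cos (2*π*min (1/2) (h+1/16)) - ε (j+1))
    (Real.cos (2*π*max 0 (h-1/16)) + ε (j+1)) with hSbdef
  set A : Set ℝ := g j ⁻¹' Sa with hAdef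
  set B : Set ℝ := g (j+1) ⁻¹' Sbᶜ with hBdef
  set D1 : Set ℝ := {x ∈ Icc (0:ℝ) 1 | ε j ≤ |Real.cos (2 * π * (n j : ℝ) * x) - g j x|}
    with hD1def
  set D2 : Set ℝ := {x ∈ Icc (0:ℝ) 1 |
      ε (j+1) ≤ |Real.cos (2 * π * (n (j+1) : ℝ) * x) - g (j+1) x|} with hD2def
  have hD1vol : volume D1 ≤ ENNReal.ofReal (ε j) := happrox j
  have hD2vol : volume D2 ≤ ENNReal.ofReal (ε (j+1)) := happrox (j+1)
  -- STEP A : μ A is large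
  have hA : ENNReal.ofReal (a/16) ≤ μ A :=
    muA_lower (n j) hN1 a (ε j) ha_pos ha_half hεj0 hεjs (g j) (happrox j)
  -- STEP B : μ B is large
  have hTle : μ (g (j+1) ⁻¹' Sb) ≤ ENNReal.ofReal (2/5) :=
    muT_upper (n (j+1)) hN2 h (ε (j+1)) (dZ_nonneg _) (dZ_le_half _) hεj'0 hεj'200
      (g (j+1)) (happrox (j+1))
  have hB : ENNReal.ofReal (3/5) ≤ μ B := by
    have hTmeas : MeasurableSet (g (j+1) ⁻¹' Sb) := (hgm (j+1)) measurableSet_Icc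
    have hBc : μ B = 1 - μ (g (j+1) ⁻¹' Sb) := by
      rw [hBdef, Set.preimage_compl]
      exact prob_compl_eq_one_sub hTmeas
    rw [hBc]
    calc ENNReal.ofReal (3/5) = 1 - ENNReal.ofReal (2/5) := by
          rw [← ENNReal.ofReal_one, ← ENNReal.ofReal_sub _ (by norm_num)]
          norm_num
      _ ≤ 1 - μ (g (j+1) ⁻¹' Sb) := tsub_le_tsub_left hTle 1
  -- STEP C : geometric inclusion
  have hincl : A ∩ B ∩ Icc (0:ℝ) 1 ⊆ D1 ∪ D2 := by
    rintro x ⟨⟨hxA, hxB⟩, hx01⟩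
    by_contra hxD
    rw [mem_union] at hxD
    push_neg at hxD
    obtain ⟨hxD1, hxD2⟩ := hxD
    have hd1 : |Real.cos (2 * π * (n j : ℝ) * x) - g j x| < ε j := by
      by_contra hcc
      push_neg at hcc
      exact hxD1 ⟨hx01, hcc⟩
    have hd2 : |Real.cos (2 * π * (n (j+1) : ℝ) * x) - g (j+1) x| < ε (j+1) := by
      by_contra hcc
      push_neg at hcc
      exact hxD2 ⟨hx01, hcc⟩
    rcases abs_lt.mp hd1 with ⟨hd1a, hd1b⟩
    rcases abs_lt.mp hd2 with ⟨hd2a, hd2b⟩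
    obtain ⟨hga, hgb⟩ := hxA
    have e1 : Real.cos (2 * π * (n j : ℝ) * x) = Real.cos (2*π*((n j : ℝ)*x)) := by
      ring_nf
    have hf1lo : Real.cos (2*π*(1/4+a/16)) < Real.cos (2*π*((n j : ℝ)*x)) := by
      rw [← e1]
      linarith
    have hf1hi : Real.cos (2*π*((n j : ℝ)*x)) < Real.cos (2*π*(1/4-a/16)) := by
      rw [← e1]
      linarith
    have hgeo := geom_step q a ((n j : ℝ)*x) ha_pos ha_half hqa hf1lo hf1hi
    have e2 : Real.cos (2*π*((q:ℝ)*((n j : ℝ)*x)))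
        = Real.cos (2 * π * (n (j+1) : ℝ) * x) := by
      rw [hqR]
      ring_nf
    rw [e2] at hgeo
    rw [← hhdef] at hgeo
    apply hxB
    exact ⟨by linarith [hgeo.1], by linarith [hgeo.2]⟩
  -- STEP D : independence and contradiction
  have hind : IndepFun (g j) (g (j+1)) μ := hindep.indepFun (by omega)
  have hmul : μ (A ∩ B) = μ A * μ B :=
    hind.measure_inter_preimage_eq_mul Sa Sbᶜ measurableSet_Ioo measurableSet_Icc.compl
  have hμap : μ (A ∩ B) = volume ((A ∩ B) ∩ Icc (0:ℝ) 1) := by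
    rw [hμdef, Measure.restrict_apply' measurableSet_Icc]
  have hsmall : μ (A ∩ B) ≤ ENNReal.ofReal (a/100) := by
    calc μ (A ∩ B) = volume ((A ∩ B) ∩ Icc (0:ℝ) 1) := hμap
      _ ≤ volume (D1 ∪ D2) := measure_mono hincl
      _ ≤ volume D1 + volume D2 := measure_union_le _ _
      _ ≤ ENNReal.ofReal (ε j) + ENNReal.ofReal (ε (j+1)) := add_le_add hD1vol hD2vol
      _ = ENNReal.ofReal (ε j + ε (j+1)) := (ENNReal.ofReal_add hεj0 hεj'0).symm
      _ ≤ ENNReal.ofReal (a/100) := ENNReal.ofReal_le_ofReal hj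
  have hbig : ENNReal.ofReal (3*a/80) ≤ μ (A ∩ B) := by
    rw [hmul]
    calc ENNReal.ofReal (3*a/80)
        = ENNReal.ofReal (a/16) * ENNReal.ofReal (3/5) := by
          rw [← ENNReal.ofReal_mul (by positivity)]
          congr 1
          ring
      _ ≤ μ A * μ B := mul_le_mul' hA hB
  have hfin : (3*a/80 : ℝ) ≤ a/100 :=
    (ENNReal.ofReal_le_ofReal_iff (by positivity)).mp (le_trans hbig hsmall)
  linarith
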